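/- If a random variable p on [0,1] has non-decreasing density f₀, then for any τ ∈ (0,1) and any strictly increasing integrable Q, E[1{p > τ}(Q(p) - Q(τ))] ≥ (1-τ)·E[Q(U) - Q(τ) | U > τ] for U uniform on (0,1). Consequently the estimator π̄₀ is not under-biased for nulls with non-decreasing density. -/

import Mathlib

open MeasureTheory Set intervalIntegral

set_option maxHeartbeats 1000000 in
/-- If a null p-value has a non-decreasing density `f₀` on `[0,1]`, then for any
`τ ∈ (0,1)` and strictly increasing integrable `Q`,
`E[1{p > τ}(Q(p) - Q(τ))] ≥ ∫_τ^1 (Q(u) - Q(τ)) du = (1-τ)·E[Q(U) - Q(τ) | U > τ]`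
for `U` uniform; i.e. the estimator `π̄₀` is not under-biased for such nulls. -/
theorem stmt_13 (f₀ Q : ℝ → ℝ) (τ : ℝ) (hτ : τ ∈ Set.Ioo (0 : ℝ) 1)
    (hnn : ∀ u ∈ Set.Icc (0 : ℝ) 1, 0 ≤ f₀ u)
    (hmono : MonotoneOn f₀ (Set.Icc 0 1))
    (hint : IntervalIntegrable f₀ MeasureTheory.volume 0 1)
    (htotal : ∫ u in (0 : ℝ)..1, f₀ u = 1)
    (hQ : StrictMonoOn Q (Set.Ioo 0 1))
    (hQint : IntervalIntegrable Q MeasureTheory.volume τ 1)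
    (hQfint : IntervalIntegrable (fun u => (Q u - Q τ) * f₀ u) MeasureTheory.volume τ 1) :
    ∫ u in τ..1, (Q u - Q τ) ≤ ∫ u in τ..1, (Q u - Q τ) * f₀ u := by
  obtain ⟨hτ0, hτ1⟩ := hτ
  have hτle1 : τ ≤ 1 := hτ1.le
  have hτmem : τ ∈ Set.Icc (0:ℝ) 1 := ⟨hτ0.le, hτle1⟩
  -- integrability of f₀ on the pieces
  have hf0τ : IntervalIntegrable f₀ volume 0 τ :=
    hint.mono_set (Set.uIcc_subset_uIcc (by simp)
      (by simp [Set.mem_uIcc]; exact ⟨hτ0.le, hτle1⟩))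
  have hfτ1 : IntervalIntegrable f₀ volume τ 1 :=
    hint.mono_set (Set.uIcc_subset_uIcc
      (by simp [Set.mem_uIcc]; exact ⟨hτ0.le, hτle1⟩) (by simp))
  have hgint : IntervalIntegrable (fun u => Q u - Q τ) volume τ 1 :=
    hQint.sub intervalIntegrable_const
  set A : ℝ := ∫ u in τ..1, f₀ u with hA
  -- Step 1 : (1 - τ) ≤ A
  have hsplit : (∫ u in (0:ℝ)..τ, f₀ u) + A = 1 := by
    rw [hA, integral_add_adjacent_intervals hf0τ hfτ1, htotal]
  have hI1 : (∫ u in (0:ℝ)..τ, f₀ u) ≤ τ * f₀ τ := by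
    have := integral_mono_on (μ := volume) (f := f₀) (g := fun _ => f₀ τ) hτ0.le hf0τ
      intervalIntegrable_const (fun x hx => hmono ⟨hx.1, hx.2.trans hτle1⟩ hτmem hx.2)
    simpa using this
  have hI2 : (1 - τ) * f₀ τ ≤ A := by
    have := integral_mono_on (μ := volume) (f := fun _ => f₀ τ) (g := f₀) hτle1
      intervalIntegrable_const hfτ1 (fun x hx => hmono hτmem ⟨hτ0.le.trans hx.1, hx.2⟩ hx.1)
    simpa [hA, smul_eq_mul] using this
  have hAτ : 1 - τ ≤ A := by nlinarith [hnn τ hτmem]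
  -- a.e. helper: {τ, 1} is null
  have hnull : (volume : Measure ℝ) ({τ, 1} : Set ℝ) = 0 :=
    (Set.toFinite _).countable.measure_zero _
  -- crossing point analysis
  by_cases hS : ∀ u ∈ Set.Ico τ 1, 1 ≤ f₀ u
  · -- f₀ ≥ 1 on the whole tail: pointwise comparison
    refine integral_mono_ae_restrict hτle1 hgint hQfint ?_
    refine (ae_restrict_iff' measurableSet_Icc).2 ?_
    filter_upwards [compl_mem_ae_iff.2 hnull] with u hu
    intro humem
    rcases humem with ⟨h1, h2⟩
    have hu1 : u ≠ 1 := fun h => hu (by simp [h])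
    have huτ : u ≠ τ := fun h => hu (by simp [h])
    have huI : u ∈ Set.Ioo τ 1 := ⟨lt_of_le_of_ne h1 (Ne.symm huτ), lt_of_le_of_ne h2 hu1⟩
    have hg0 : 0 ≤ Q u - Q τ :=
      sub_nonneg.2 ((hQ.monotoneOn) ⟨hτ0, hτ1⟩ ⟨hτ0.trans huI.1, huI.2⟩ huI.1.le)
    have hf1 : 1 ≤ f₀ u := hS u ⟨huI.1.le, huI.2⟩
    nlinarith
  · push_neg at hS
    obtain ⟨u₀, hu₀mem, hu₀⟩ := hS
    set S : Set ℝ := {u ∈ Set.Ico τ 1 | f₀ u < 1} with hSdef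
    have hne : S.Nonempty := ⟨u₀, hu₀mem, hu₀⟩
    have hbdd : BddAbove S := ⟨1, fun x hx => hx.1.2.le⟩
    set c : ℝ := sSup S with hc
    have hcτ : τ ≤ c := hu₀mem.1.trans (le_csSup hbdd ⟨hu₀mem, hu₀⟩)
    have hc1 : c ≤ 1 := csSup_le hne (fun x hx => hx.1.2.le)
    have f_le : ∀ u, τ ≤ u → u < c → f₀ u ≤ 1 := by
      intro u h1 h2
      obtain ⟨s, hsS, hus⟩ := exists_lt_of_lt_csSup hne h2
      have hs1 : s < 1 := hsS.1.2
      have : f₀ u ≤ f₀ s := hmono ⟨hτ0.le.trans h1, (hus.le.trans hs1.le)⟩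
        ⟨hτ0.le.trans hsS.1.1, hs1.le⟩ hus.le
      exact this.trans hsS.2.le
    have f_ge : ∀ u, c < u → u < 1 → 1 ≤ f₀ u := by
      intro u h1 h2
      by_contra hlt
      push_neg at hlt
      exact absurd (le_csSup hbdd ⟨⟨hcτ.trans h1.le, h2⟩, hlt⟩) (not_le.2 h1)
    by_cases hceq : c < 1
    · -- main case: compare with ψ u = (Q u - Q τ) + K * (f₀ u - 1)
      have hcI : c ∈ Set.Ioo (0:ℝ) 1 := ⟨hτ0.trans_le hcτ, hceq⟩
      set K : ℝ := Q c - Q τ with hK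
      have hK0 : 0 ≤ K := sub_nonneg.2 ((hQ.monotoneOn) ⟨hτ0, hτ1⟩ hcI hcτ)
      have hψint : IntervalIntegrable (fun u => (Q u - Q τ) + K * (f₀ u - 1)) volume τ 1 :=
        hgint.add ((hfτ1.sub intervalIntegrable_const).const_mul K)
      have step : (∫ u in τ..1, ((Q u - Q τ) + K * (f₀ u - 1))) ≤
          ∫ u in τ..1, (Q u - Q τ) * f₀ u := by
        refine integral_mono_ae_restrict hτle1 hψint hQfint ?_
        refine (ae_restrict_iff' measurableSet_Icc).2 ?_
        filter_upwards [compl_mem_ae_iff.2 hnull] with u hu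
        intro humem
        have hu1 : u ≠ 1 := fun h => hu (by simp [h])
        have huτ : u ≠ τ := fun h => hu (by simp [h])
        have huI : u ∈ Set.Ioo τ 1 :=
          ⟨lt_of_le_of_ne humem.1 (Ne.symm huτ), lt_of_le_of_ne humem.2 hu1⟩
        have huI01 : u ∈ Set.Ioo (0:ℝ) 1 := ⟨hτ0.trans huI.1, huI.2⟩
        have key : 0 ≤ (Q u - Q τ - K) * (f₀ u - 1) := by
          rcases lt_trichotomy u c with h | h | h
          · have h1 : Q u ≤ Q c := (hQ.monotoneOn) huI01 hcI h.le
            have h2 : f₀ u ≤ 1 := f_le u huI.1.le h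
            nlinarith
          · subst h; simp [hK]
          · have h1 : Q c ≤ Q u := (hQ.monotoneOn) hcI huI01 h.le
            have h2 : 1 ≤ f₀ u := f_ge u h huI.2
            nlinarith
        nlinarith
      have comp : (∫ u in τ..1, ((Q u - Q τ) + K * (f₀ u - 1))) =
          (∫ u in τ..1, (Q u - Q τ)) + K * (A - (1 - τ)) := by
        rw [integral_add hgint ((hfτ1.sub intervalIntegrable_const).const_mul K),
          intervalIntegral.integral_const_mul, integral_sub hfτ1 intervalIntegrable_const]
        simp [hA, smul_eq_mul]
      have : (∫ u in τ..1, (Q u - Q τ)) ≤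
          (∫ u in τ..1, ((Q u - Q τ) + K * (f₀ u - 1))) := by
        rw [comp]
        nlinarith
      exact this.trans step
    · -- c = 1 : f₀ ≤ 1 a.e. on the tail, so combined with A ≥ 1-τ, f₀ = 1 a.e. there
      have hceq' : c = 1 := le_antisymm hc1 (not_lt.1 hceq)
      have hf_le : ∀ u, τ ≤ u → u < 1 → f₀ u ≤ 1 := fun u h1 h2 =>
        f_le u h1 (hceq' ▸ h2)
      have hA_le : A ≤ 1 - τ := by
        have := integral_mono_ae_restrict (μ := volume) (f := f₀) (g := fun _ => (1:ℝ))
          hτle1 hfτ1 intervalIntegrable_const ?_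
        · simpa [hA, smul_eq_mul] using this
        · refine (ae_restrict_iff' measurableSet_Icc).2 ?_
          filter_upwards [compl_mem_ae_iff.2 hnull] with u hu humem
          have hu1 : u ≠ 1 := fun h => hu (by simp [h])
          exact hf_le u humem.1 (lt_of_le_of_ne humem.2 hu1)
      have hAeq : A = 1 - τ := le_antisymm hA_le hAτ
      -- ∫ (1 - f₀) over Ioc τ 1 is zero with a.e.-nonneg integrand
      have hzero : (∫ u in Set.Ioc τ 1, (1 - f₀ u)) = 0 := by
        have h1 : (∫ u in τ..1, (1 - f₀ u)) = (1 - τ) - A := by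
          rw [integral_sub intervalIntegrable_const hfτ1]
          simp [hA, smul_eq_mul]
        rw [← integral_of_le hτle1, h1, hAeq]; ring
      have hnonneg' : 0 ≤ᵐ[volume.restrict (Set.Ioc τ 1)] fun u => 1 - f₀ u := by
        refine (ae_restrict_iff' measurableSet_Ioc).2 ?_
        filter_upwards [compl_mem_ae_iff.2 hnull] with u hu humem
        have hu1 : u ≠ 1 := fun h => hu (by simp [h])
        have := hf_le u humem.1.le (lt_of_le_of_ne humem.2 hu1)
        simp only [Pi.zero_apply]
        linarith
      have h1int : IntervalIntegrable (fun u => 1 - f₀ u) volume τ 1 :=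
        intervalIntegrable_const.sub hfτ1
      have hinteg : Integrable (fun u => 1 - f₀ u) (volume.restrict (Set.Ioc τ 1)) :=
        h1int.1
      clear_value A c S
      have hiff := @integral_eq_zero_iff_of_nonneg_ae ℝ _ (volume.restrict (Set.Ioc τ 1)) (fun u => 1 - f₀ u) hnonneg' hinteg
      have haezero : (fun u => 1 - f₀ u) =ᵐ[volume.restrict (Set.Ioc τ 1)] 0 := by
        apply hiff.1
        exact hzero
      have heq : (∫ u in τ..1, (Q u - Q τ)) = ∫ u in τ..1, (Q u - Q τ) * f₀ u := by
        rw [integral_of_le hτle1, integral_of_le hτle1]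
        refine setIntegral_congr_ae measurableSet_Ioc ?_
        have := (ae_restrict_iff' measurableSet_Ioc).1 haezero
        filter_upwards [this] with u hu humem
        have hfu : f₀ u = 1 := by
          have := hu humem
          simp only [Pi.zero_apply] at this
          linarith
        simp [hfu]
      exact heq.le
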